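/- For two players Alice and Bob on the cake [0,1], where Alice's measure is uniform on [0,1] and Bob's measure is uniform on the interval [1/2 - δ, 1/2 + δ] (for small δ > 0), every envy-free complete connected division has utilitarian welfare at most 1 + 2δ·c for an appropriate constant, while there is an envy-free partial connected division with utilitarian welfare at least 3/2 - ε: give Bob the interval (1/2 - δ, 1 - ε') and Alice the interval (0, 1/2 - δ), discarding (1 - ε', 1) for suitable ε'. In particular, for any ε > 0 there is a two-player instance exhibiting a utilitarian dumping paradox of at least 3/2 - ε. -/

import Mathlib

open MeasureTheory Set
open scoped ENNReal

/-- A connected division of the cake `[0,1]` among `n` players: each player gets an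
open interval, the intervals are pairwise disjoint and contained in `[0,1]`. -/
structure ConnDiv (n : ℕ) where
  pieces : Fin n → Set ℝ
  isInterval : ∀ i, ∃ a b : ℝ, pieces i = Set.Ioo a b
  subset : ∀ i, pieces i ⊆ Set.Icc (0:ℝ) 1
  disj : Pairwise fun i j => Disjoint (pieces i) (pieces j)

/-- A connected division is complete if the closures of the pieces cover `[0,1]`. -/
def ConnDiv.Complete {n : ℕ} (d : ConnDiv n) : Prop :=
  Set.Icc (0:ℝ) 1 ⊆ ⋃ i, closure (d.pieces i)

/-- Envy-freeness: every player weakly prefers her own piece. -/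
def EnvyFree {n : ℕ} (v : Fin n → Measure ℝ) (d : ConnDiv n) : Prop :=
  ∀ i j, v i (d.pieces j) ≤ v i (d.pieces i)

/-- Utilitarian welfare: sum of own-piece values. -/
noncomputable def util {n : ℕ} (v : Fin n → Measure ℝ) (d : ConnDiv n) : ℝ≥0∞ :=
  ∑ i, v i (d.pieces i)

/-- Egalitarian welfare: minimum own-piece value. -/
noncomputable def egal {n : ℕ} (v : Fin n → Measure ℝ) (d : ConnDiv n) : ℝ≥0∞ :=
  ⨅ i, v i (d.pieces i)

/-- The uniform measure of total mass `m` on the interval `(a,b)`. -/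
noncomputable def unifOn (a b m : ℝ) : Measure ℝ :=
  ENNReal.ofReal (m / (b - a)) • volume.restrict (Set.Ioo a b)

/-- Alice's measure: uniform (Lebesgue) on `[0,1]`. -/
noncomputable def vAlice : Measure ℝ := volume.restrict (Set.Icc (0:ℝ) 1)

/-- Bob's measure: uniform on `[1/2 - δ, 1/2 + δ]`. -/
noncomputable def vBob (δ : ℝ) : Measure ℝ := unifOn (1/2 - δ) (1/2 + δ) 1

/-! ### Auxiliary lemmas -/

lemma vAlice_Ioo {u v : ℝ} (h : Ioo u v ⊆ Icc (0:ℝ) 1) :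
    vAlice (Ioo u v) = ENNReal.ofReal (v - u) := by
  rw [vAlice, Measure.restrict_apply measurableSet_Ioo, Set.inter_eq_left.2 h,
    Real.volume_Ioo]

lemma vBob_Ioo (δ u v : ℝ) :
    vBob δ (Ioo u v) =
      ENNReal.ofReal (1/(2*δ)) * ENNReal.ofReal (min v (1/2+δ) - max u (1/2-δ)) := by
  have h2 : (1/2+δ) - (1/2-δ) = 2*δ := by ring
  rw [vBob, unifOn, Measure.smul_apply, Measure.restrict_apply measurableSet_Ioo,
    Set.Ioo_inter_Ioo, Real.volume_Ioo, smul_eq_mul, h2]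

lemma classify_aux {a b c d : ℝ} (hab : a < b) (hcd : c < d)
    (ha : 0 ≤ a) (hb : b ≤ 1) (hc : 0 ≤ c) (hd : d ≤ 1) (hbc : b ≤ c)
    (hcov : Icc (0:ℝ) 1 ⊆ Icc a b ∪ Icc c d) :
    a = 0 ∧ b = c ∧ d = 1 := by
  have h1 : a ≤ 0 := by
    by_contra h
    push_neg at h
    have := hcov (show a/2 ∈ Icc (0:ℝ) 1 by constructor <;> [linarith; linarith])
    rcases this with h' | h' <;> rcases h' with ⟨h1', h2'⟩ <;> linarith
  have h2 : 1 ≤ d := by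
    by_contra h
    push_neg at h
    have := hcov (show (d+1)/2 ∈ Icc (0:ℝ) 1 by constructor <;> [linarith; linarith])
    rcases this with h' | h' <;> rcases h' with ⟨h1', h2'⟩ <;> linarith
  have h3 : c ≤ b := by
    by_contra h
    push_neg at h
    have := hcov (show (b+c)/2 ∈ Icc (0:ℝ) 1 by constructor <;> [linarith; linarith])
    rcases this with h' | h' <;> rcases h' with ⟨h1', h2'⟩ <;> linarith
  exact ⟨le_antisymm h1 ha, le_antisymm hbc h3, le_antisymm hd h2⟩

lemma classify {a b c d : ℝ} (hS : Ioo a b ⊆ Icc (0:ℝ) 1) (hT : Ioo c d ⊆ Icc (0:ℝ) 1)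
    (hdisj : Disjoint (Ioo a b) (Ioo c d))
    (hcov : Icc (0:ℝ) 1 ⊆ closure (Ioo a b) ∪ closure (Ioo c d)) :
    (∃ t, 0 ≤ t ∧ t ≤ 1 ∧ Ioo a b = Ioo 0 t ∧ Ioo c d = Ioo t 1) ∨
    (∃ t, 0 ≤ t ∧ t ≤ 1 ∧ Ioo c d = Ioo 0 t ∧ Ioo a b = Ioo t 1) := by
  rcases le_or_gt b a with hba | hab
  · -- first interval empty
    have he : Ioo a b = (∅ : Set ℝ) := Ioo_eq_empty (not_lt.2 hba)
    rw [he, closure_empty, empty_union] at hcov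
    have hcd : c < d := by
      by_contra h
      push_neg at h
      rw [Ioo_eq_empty (not_lt.2 h), closure_empty] at hcov
      exact hcov (show (0:ℝ) ∈ Icc (0:ℝ) 1 by norm_num)
    rw [closure_Ioo hcd.ne] at hcov
    have hsub := (Icc_subset_Icc_iff hcd.le).1
      (by simpa [closure_Ioo hcd.ne, closure_Icc] using closure_mono hT)
    have hsup := (Icc_subset_Icc_iff (by norm_num : (0:ℝ) ≤ 1)).1 hcov
    left
    refine ⟨0, le_refl 0, by norm_num, by simp [he], ?_⟩
    rw [show c = 0 by linarith [hsub.1, hsup.1], show d = 1 by linarith [hsub.2, hsup.2]]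
  rcases le_or_gt d c with hdc | hcd
  · -- second interval empty
    have he : Ioo c d = (∅ : Set ℝ) := Ioo_eq_empty (not_lt.2 hdc)
    rw [he, closure_empty, union_empty, closure_Ioo hab.ne] at hcov
    have hsub := (Icc_subset_Icc_iff hab.le).1
      (by simpa [closure_Ioo hab.ne, closure_Icc] using closure_mono hS)
    have hsup := (Icc_subset_Icc_iff (by norm_num : (0:ℝ) ≤ 1)).1 hcov
    left
    refine ⟨1, by norm_num, le_refl 1, ?_, by simp [he]⟩
    rw [show a = 0 by linarith [hsub.1, hsup.1], show b = 1 by linarith [hsub.2, hsup.2]]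
  -- both intervals nonempty
  have hS' := (Icc_subset_Icc_iff hab.le).1
    (by simpa [closure_Ioo hab.ne, closure_Icc] using closure_mono hS)
  have hT' := (Icc_subset_Icc_iff hcd.le).1
    (by simpa [closure_Ioo hcd.ne, closure_Icc] using closure_mono hT)
  rw [closure_Ioo hab.ne, closure_Ioo hcd.ne] at hcov
  have hd' : min b d ≤ max a c := Set.Ioo_disjoint_Ioo.1 hdisj
  rcases le_or_gt b c with hbc | hcb
  · obtain ⟨h1, h2, h3⟩ := classify_aux hab hcd hS'.1 hS'.2 hT'.1 hT'.2 hbc hcov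
    exact Or.inl ⟨b, by linarith, by linarith, by rw [h1], by rw [h2, h3]⟩
  · have hda : d ≤ a := by
      rcases min_cases b d with ⟨h, _⟩ | ⟨h, _⟩ <;> rcases max_cases a c with ⟨h', _⟩ | ⟨h', _⟩ <;>
        rw [h, h'] at hd' <;> linarith
    obtain ⟨h1, h2, h3⟩ := classify_aux hcd hab hT'.1 hT'.2 hS'.1 hS'.2 hda
      (by rw [union_comm] at hcov; exact hcov)
    exact Or.inr ⟨d, by linarith, by linarith, by rw [h1], by rw [h2, h3]⟩

lemma complete_util_le {δ : ℝ} (hδ0 : 0 < δ) (hδ2 : δ < 1/2)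
    (x : ConnDiv 2) (hc : x.Complete) (hef : EnvyFree ![vAlice, vBob δ] x) :
    util ![vAlice, vBob δ] x ≤ 1 := by
  obtain ⟨a, b, hab⟩ := x.isInterval 0
  obtain ⟨c, d, hcd⟩ := x.isInterval 1
  have h2δ : (0:ℝ) < 2*δ := by linarith
  have hu1 : 1 ≤ 1/(2*δ) := by rw [le_div_iff₀ h2δ]; linarith
  have huδ : 1/(2*δ)*δ = 1/2 := by field_simp
  have hcov : Icc (0:ℝ) 1 ⊆ closure (Ioo a b) ∪ closure (Ioo c d) := by
    intro z hz
    have h := hc hz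
    rw [Set.mem_iUnion, Fin.exists_fin_two] at h
    rwa [hab, hcd] at h
  have hEFA := hef 0 1
  simp only [Matrix.cons_val_zero, Matrix.cons_val_one, Matrix.head_cons] at hEFA
  rw [hab, hcd] at hEFA
  have hkey : ∀ t : ℝ, 0 ≤ t → t ≤ 1 → 1 - t ≤ t →
      vAlice (Ioo 0 t) + vBob δ (Ioo t 1) ≤ 1 := by
    intro t ht0 ht1 hhalf
    rw [vAlice_Ioo (Ioo_subset_Icc_self.trans (Icc_subset_Icc le_rfl ht1)), sub_zero,
      vBob_Ioo, min_eq_right (by linarith), max_eq_left (by linarith),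
      ← ENNReal.ofReal_mul (by positivity)]
    rcases le_or_gt t (1/2+δ) with h | h
    · rw [← ENNReal.ofReal_add ht0 (mul_nonneg (by positivity) (by linarith)),
        ← ENNReal.ofReal_one]
      apply ENNReal.ofReal_le_ofReal
      nlinarith [mul_nonneg (sub_nonneg.2 hu1) (by linarith : (0:ℝ) ≤ t - 1/2), huδ]
    · have hz : 1/(2*δ) * (1/2+δ-t) ≤ 0 :=
        mul_nonpos_of_nonneg_of_nonpos (by positivity) (by linarith)
      rw [ENNReal.ofReal_eq_zero.2 hz, add_zero, ← ENNReal.ofReal_one]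
      exact ENNReal.ofReal_le_ofReal ht1
  have hkey' : ∀ t : ℝ, 0 ≤ t → t ≤ 1 → t ≤ 1 - t →
      vAlice (Ioo t 1) + vBob δ (Ioo 0 t) ≤ 1 := by
    intro t ht0 ht1 hhalf
    rw [vAlice_Ioo (Ioo_subset_Icc_self.trans (Icc_subset_Icc ht0 le_rfl)),
      vBob_Ioo, min_eq_left (by linarith), max_eq_right (by linarith),
      ← ENNReal.ofReal_mul (by positivity)]
    rcases le_or_gt (1/2-δ) t with h | h
    · rw [← ENNReal.ofReal_add (by linarith) (mul_nonneg (by positivity) (by linarith)),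
        ← ENNReal.ofReal_one]
      apply ENNReal.ofReal_le_ofReal
      nlinarith [mul_nonneg (sub_nonneg.2 hu1) (by linarith : (0:ℝ) ≤ 1/2 - t), huδ]
    · have hz : 1/(2*δ) * (t - (1/2-δ)) ≤ 0 :=
        mul_nonpos_of_nonneg_of_nonpos (by positivity) (by linarith)
      rw [ENNReal.ofReal_eq_zero.2 hz, add_zero, ← ENNReal.ofReal_one]
      exact ENNReal.ofReal_le_ofReal (by linarith)
  rcases classify (hab ▸ x.subset 0) (hcd ▸ x.subset 1)
      (by simpa only [hab, hcd] using x.disj (show (0:Fin 2) ≠ 1 by decide)) hcov with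
    ⟨t, ht0, ht1, hA, hB⟩ | ⟨t, ht0, ht1, hB, hA⟩
  · -- Alice gets (0,t), Bob gets (t,1)
    have hp0 : x.pieces 0 = Ioo 0 t := by rw [hab, hA]
    have hp1 : x.pieces 1 = Ioo t 1 := by rw [hcd, hB]
    rw [hA, hB] at hEFA
    rw [vAlice_Ioo (Ioo_subset_Icc_self.trans (Icc_subset_Icc le_rfl ht1)),
      vAlice_Ioo (Ioo_subset_Icc_self.trans (Icc_subset_Icc ht0 le_rfl)), sub_zero] at hEFA
    have ht : 1 - t ≤ t := by
      rcases le_or_gt (1-t) 0 with h | h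
      · linarith
      · exact (ENNReal.ofReal_le_ofReal_iff ht0).1 hEFA
    rw [util, Fin.sum_univ_two]
    simp only [Matrix.cons_val_zero, Matrix.cons_val_one, Matrix.head_cons]
    rw [hp0, hp1]
    exact hkey t ht0 ht1 ht
  · -- Alice gets (t,1), Bob gets (0,t)
    have hp0 : x.pieces 0 = Ioo t 1 := by rw [hab, hA]
    have hp1 : x.pieces 1 = Ioo 0 t := by rw [hcd, hB]
    rw [hA, hB] at hEFA
    rw [vAlice_Ioo (Ioo_subset_Icc_self.trans (Icc_subset_Icc ht0 le_rfl)),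
      vAlice_Ioo (Ioo_subset_Icc_self.trans (Icc_subset_Icc le_rfl ht1)), sub_zero] at hEFA
    have ht : t ≤ 1 - t := by
      rcases le_or_gt t 0 with h | h
      · linarith
      · exact (ENNReal.ofReal_le_ofReal_iff (by linarith)).1 hEFA
    rw [util, Fin.sum_univ_two]
    simp only [Matrix.cons_val_zero, Matrix.cons_val_one, Matrix.head_cons]
    rw [hp0, hp1]
    exact hkey' t ht0 ht1 ht

/-- Two-player utilitarian dumping paradox of at least `3/2 - ε`. -/
theorem two_player_utilitarian_dumping (ε : ℝ) (hε : 0 < ε) :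
    ∃ δ : ℝ, 0 < δ ∧ δ < 1/2 ∧
      -- every envy-free complete connected division has welfare at most 1 + 2δc
      (∃ c : ℝ, ∀ x : ConnDiv 2, x.Complete → EnvyFree ![vAlice, vBob δ] x →
        util ![vAlice, vBob δ] x ≤ ENNReal.ofReal (1 + 2*δ*c)) ∧
      -- the partial division: Alice gets (0, 1/2-δ), Bob gets (1/2-δ, 1-ε'),
      -- and (1-ε', 1) is discarded
      (∃ ε' : ℝ, 0 < ε' ∧ ε' < 1 ∧ ∃ y : ConnDiv 2,
        y.pieces 0 = Set.Ioo 0 (1/2 - δ) ∧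
        y.pieces 1 = Set.Ioo (1/2 - δ) (1 - ε') ∧
        EnvyFree ![vAlice, vBob δ] y ∧ ¬ y.Complete ∧
        ENNReal.ofReal (3/2 - ε) ≤ util ![vAlice, vBob δ] y ∧
        ∀ x : ConnDiv 2, x.Complete → EnvyFree ![vAlice, vBob δ] x →
          ENNReal.ofReal (3/2 - ε) * util ![vAlice, vBob δ] x ≤
            util ![vAlice, vBob δ] y) := by
  set δ : ℝ := min ε (1/6) / 2 with hδdef
  have hδ0 : 0 < δ := by
    have h1 : (0:ℝ) < min ε (1/6) := lt_min hε (by norm_num)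
    simp only [hδdef]; linarith
  have hδε : δ < ε := by
    have h1 : min ε (1/6) ≤ ε := min_le_left _ _
    simp only [hδdef]; linarith
  have hδ6 : δ ≤ 1/12 := by
    have h1 : min ε (1/6) ≤ 1/6 := min_le_right _ _
    simp only [hδdef]; linarith
  have hδ2 : δ < 1/2 := by linarith
  have hsub0 : Ioo (0:ℝ) (1/2 - δ) ⊆ Icc (0:ℝ) 1 :=
    Ioo_subset_Icc_self.trans (Icc_subset_Icc le_rfl (by linarith))
  have hsub1 : Ioo (1/2 - δ) (1 - 2*δ) ⊆ Icc (0:ℝ) 1 :=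
    Ioo_subset_Icc_self.trans (Icc_subset_Icc (by linarith) (by linarith))
  have hdyy : Disjoint (Ioo (0:ℝ) (1/2 - δ)) (Ioo (1/2 - δ) (1 - 2*δ)) :=
    Set.Ioo_disjoint_Ioo.2 (le_trans (min_le_left _ _) (le_max_right _ _))
  obtain ⟨y, hy⟩ : ∃ y : ConnDiv 2,
      y.pieces = ![Ioo 0 (1/2 - δ), Ioo (1/2 - δ) (1 - 2*δ)] := by
    refine ⟨⟨![Ioo 0 (1/2 - δ), Ioo (1/2 - δ) (1 - 2*δ)], ?_, ?_, ?_⟩, rfl⟩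
    · intro i; fin_cases i
      · exact ⟨0, 1/2 - δ, rfl⟩
      · exact ⟨1/2 - δ, 1 - 2*δ, rfl⟩
    · intro i; fin_cases i
      · exact hsub0
      · exact hsub1
    · intro i j hij
      fin_cases i <;> fin_cases j
      · exact absurd rfl hij
      · exact hdyy
      · exact hdyy.symm
      · exact absurd rfl hij
  have hy0 : y.pieces 0 = Ioo 0 (1/2 - δ) := by rw [hy]; rfl
  have hy1 : y.pieces 1 = Ioo (1/2 - δ) (1 - 2*δ) := by rw [hy]; rfl
  have hBob1 : vBob δ (Ioo (1/2 - δ) (1 - 2*δ)) = 1 := by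
    rw [vBob_Ioo, min_eq_right (by linarith), max_self]
    rw [← ENNReal.ofReal_mul (by positivity)]
    rw [show 1/(2*δ) * ((1/2+δ) - (1/2-δ)) = 1 by field_simp; ring]
    exact ENNReal.ofReal_one
  have huy : util ![vAlice, vBob δ] y = ENNReal.ofReal (3/2 - δ) := by
    rw [util, Fin.sum_univ_two]
    simp only [Matrix.cons_val_zero, Matrix.cons_val_one, Matrix.head_cons]
    rw [hy0, hy1, vAlice_Ioo hsub0, sub_zero, hBob1, ← ENNReal.ofReal_one,
      ← ENNReal.ofReal_add (by linarith) (by norm_num)]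
    congr 1
    ring
  refine ⟨δ, hδ0, hδ2, ⟨0, fun x hc hef => ?_⟩, 2*δ, by linarith, by linarith,
    y, hy0, hy1, ?_, ?_, ?_, ?_⟩
  · calc util ![vAlice, vBob δ] x ≤ 1 := complete_util_le hδ0 hδ2 x hc hef
      _ = ENNReal.ofReal (1 + 2*δ*0) := by norm_num
  · -- envy-free
    intro i j
    fin_cases i <;> fin_cases j
    · exact le_rfl
    · show vAlice (y.pieces 1) ≤ vAlice (y.pieces 0)
      rw [hy0, hy1, vAlice_Ioo hsub0, vAlice_Ioo hsub1, sub_zero]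
      exact ENNReal.ofReal_le_ofReal (by linarith)
    · show vBob δ (y.pieces 0) ≤ vBob δ (y.pieces 1)
      rw [hy0, vBob_Ioo, min_eq_left (by linarith), max_eq_right (by linarith)]
      simp
    · exact le_rfl
  · -- not complete
    intro h
    have h1 := h (show (1:ℝ) ∈ Icc (0:ℝ) 1 by norm_num)
    rw [Set.mem_iUnion, Fin.exists_fin_two, hy0, hy1] at h1
    rw [closure_Ioo (show (0:ℝ) ≠ 1/2 - δ from ne_of_lt (by linarith)),
      closure_Ioo (show (1/2 - δ : ℝ) ≠ 1 - 2*δ from ne_of_lt (by linarith))] at h1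
    rcases h1 with ⟨_, h'⟩ | ⟨_, h'⟩ <;> linarith
  · rw [huy]
    exact ENNReal.ofReal_le_ofReal (by linarith)
  · intro x hc hef
    calc ENNReal.ofReal (3/2 - ε) * util ![vAlice, vBob δ] x
        ≤ ENNReal.ofReal (3/2 - ε) * 1 :=
          mul_le_mul_right (complete_util_le hδ0 hδ2 x hc hef) _
      _ = ENNReal.ofReal (3/2 - ε) := mul_one _
      _ ≤ util ![vAlice, vBob δ] y := by
          rw [huy]; exact ENNReal.ofReal_le_ofReal (by linarith)
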